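/- Let S ⊆ ℤ^d be a finitely generated subsemigroup with S - S = ℤ^d and S ≠ ℤ^d, and let a be the sum of a set of generators. Then the intersection ⋂_{n≥0} (S + n•a) is empty. -/

import Mathlib

theorem stmt_2 (d r : ℕ) (S : AddSubmonoid (Fin d → ℤ)) (e : Fin r → (Fin d → ℤ))
    (hgen : S = AddSubmonoid.closure (Set.range e))
    (hgrp : ∀ x : Fin d → ℤ, ∃ s ∈ S, ∃ t ∈ S, x = s - t)
    (hne : (S : Set (Fin d → ℤ)) ≠ Set.univ)
    (a : Fin d → ℤ) (ha : a = ∑ i, e i) :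
    ⋂ n : ℕ, (fun s => s + n • a) '' (S : Set (Fin d → ℤ)) = ∅ := by
  have key : ∀ s ∈ S, ∃ n : ℕ, n • a - s ∈ S := by
    intro s hs
    rw [hgen] at hs ⊢
    induction hs using AddSubmonoid.closure_induction with
    | mem x hx =>
      obtain ⟨i, rfl⟩ := hx
      refine ⟨1, ?_⟩
      have h1 : (1 : ℕ) • a - e i = ∑ j ∈ Finset.univ.erase i, e j := by
        rw [one_smul, ha, ← Finset.add_sum_erase _ _ (Finset.mem_univ i)]
        abel
      rw [h1]
      exact AddSubmonoid.sum_mem _ (fun j _ => AddSubmonoid.subset_closure ⟨j, rfl⟩)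
    | zero => exact ⟨0, by simpa using AddSubmonoid.zero_mem _⟩
    | add x y hx hy ihx ihy =>
      obtain ⟨n, hn⟩ := ihx
      obtain ⟨m, hm⟩ := ihy
      refine ⟨n + m, ?_⟩
      have : (n + m) • a - (x + y) = (n • a - x) + (m • a - y) := by
        rw [add_nsmul]; abel
      rw [this]
      exact AddSubmonoid.add_mem _ hn hm
  rw [Set.eq_empty_iff_forall_notMem]
  intro x hx
  simp only [Set.mem_iInter, Set.mem_image, SetLike.mem_coe] at hx
  apply hne
  ext y
  simp only [Set.mem_univ, iff_true, SetLike.mem_coe]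
  obtain ⟨s, hs, t, ht, hst⟩ := hgrp (x - y)
  obtain ⟨n, hn⟩ := key s hs
  obtain ⟨u, hu, hux⟩ := hx n
  have hy : y = u + (n • a - s) + t := by
    rw [← hux] at hst
    linear_combination -hst
  rw [hy]
  exact S.add_mem (S.add_mem hu hn) ht
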